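/- For the GLLOWJFA over {a,b,c} with states q0,q1,q2, start q0, accepting state q1, and rules (q1,c,q0),(q1,ab,q1),(q2,a,q0),(q2,b,q0), the accepted language is D·c, where D is the Dyck language over {a,b}. -/

import Mathlib

open List

/-- Two-letter alphabet. -/
inductive AB : Type | a | b
  deriving DecidableEq, Repr

/-- Three-letter alphabet. -/
inductive ABC : Type | a | b | c
  deriving DecidableEq, Repr

instance : Fintype AB := ⟨⟨{AB.a, AB.b}, by decide⟩, by intro x; cases x <;> decide⟩
instance : Fintype ABC := ⟨⟨{ABC.a, ABC.b, ABC.c}, by decide⟩, by intro x; cases x <;> decide⟩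

/-- The Dyck language over the two designated letters `a` (open) and `b` (close):
balanced words using only `a` and `b`. -/
def Dyck {α : Type} [DecidableEq α] (a b : α) : Set (List α) :=
  {w | (∀ x ∈ w, x = a ∨ x = b) ∧ w.count a = w.count b ∧
       ∀ u, u <+: w → u.count b ≤ u.count a}

/-- `u` contains no word from `S` as a subword (infix). -/
def NoSub {α : Type} (S : Set (List α)) (u : List α) : Prop :=
  ¬ ∃ w ∈ S, w <:+: u

/-! ### Right one-way jumping finite automata -/

structure ROWJFA (α σ : Type) where
  start : σ
  accept : Set σ
  rules : Set (σ × α × σ)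
  det : ∀ p a q q', (p, a, q) ∈ rules → (p, a, q') ∈ rules → q = q'

namespace ROWJFA
variable {α σ : Type}

def sig (A : ROWJFA α σ) (p : σ) : Set α := {a | ∃ q, (p, a, q) ∈ A.rules}

/-- `p x a y ↷ q y x` when `(p,a,q) ∈ R` and `x ∈ (Σ∖Σ_p)*`. -/
inductive Step (A : ROWJFA α σ) : σ × List α → σ × List α → Prop
  | jump {p q : σ} {a : α} (x y : List α) :
      (p, a, q) ∈ A.rules → (∀ b ∈ x, b ∉ A.sig p) →
      Step A (p, x ++ a :: y) (q, y ++ x)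

def language (A : ROWJFA α σ) : Set (List α) :=
  {w | ∃ qf ∈ A.accept, Relation.ReflTransGen (Step A) (A.start, w) (qf, [])}

end ROWJFA

def ROWJ {α : Type} (L : Set (List α)) : Prop :=
  ∃ (σ : Type) (_ : Finite σ) (A : ROWJFA α σ), A.language = L

/-! ### Left one-way jumping finite automata -/

structure LOWJFA (α σ : Type) where
  start : σ
  accept : Set σ
  /-- A rule `(q, a, p)` means: from state `p`, delete `a`, move to state `q`. -/
  rules : Set (σ × α × σ)
  det : ∀ p a q q', (q, a, p) ∈ rules → (q', a, p) ∈ rules → q = q'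

namespace LOWJFA
variable {α σ : Type}

def sig (A : LOWJFA α σ) (p : σ) : Set α := {a | ∃ q, (q, a, p) ∈ A.rules}

/-- `x y q ↶ y a x p` when `(q,a,p) ∈ R` and `x ∈ (Σ∖Σ_p)*`;
configurations are in `Σ* Q`. -/
inductive Step (A : LOWJFA α σ) : List α × σ → List α × σ → Prop
  | jump {p q : σ} {a : α} (x y : List α) :
      (q, a, p) ∈ A.rules → (∀ b ∈ x, b ∉ A.sig p) →
      Step A (y ++ a :: x, p) (x ++ y, q)

def language (A : LOWJFA α σ) : Set (List α) :=
  {w | ∃ qf ∈ A.accept, Relation.ReflTransGen (Step A) (w, A.start) ([], qf)}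

end LOWJFA

def LOWJ {α : Type} (L : Set (List α)) : Prop :=
  ∃ (σ : Type) (_ : Finite σ) (A : LOWJFA α σ), A.language = L

/-! ### Generalized right linear one-way jumping finite automata -/

structure GRLOWJFA (α σ : Type) where
  start : σ
  accept : Set σ
  rules : Set (σ × List α × σ)
  finite : rules.Finite
  ne : ∀ r ∈ rules, r.2.1 ≠ ([] : List α)
  det : ∀ p w q q', (p, w, q) ∈ rules → (p, w, q') ∈ rules → q = q'

namespace GRLOWJFA
variable {α σ : Type}

def sig (A : GRLOWJFA α σ) (p : σ) : Set (List α) := {w | ∃ q, (p, w, q) ∈ A.rules}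

/-- Configurations are triples `(t, p, v)` representing `t p v ∈ Σ* Q Σ*`. -/
inductive Step (A : GRLOWJFA α σ) :
    List α × σ × List α → List α × σ × List α → Prop
  /-- `t p u x v ↷ t u q v`. -/
  | rule {p q : σ} {x : List α} (t u v : List α) :
      (p, x, q) ∈ A.rules →
      NoSub (A.sig p) u →
      (¬ ∃ u₂ x₁ : List α, u₂ ≠ [] ∧ x₁ ≠ [] ∧ u₂ <:+ u ∧ x₁ <+: x ∧ u₂ ++ x₁ = x) →
      Step A (t, p, u ++ x ++ v) (t ++ u, q, v)
  /-- `x p y ↷ p x y`. -/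
  | ret {p : σ} (x y : List α) :
      x ≠ [] → NoSub (A.sig p) y →
      Step A (x, p, y) ([], p, x ++ y)

def language (A : GRLOWJFA α σ) : Set (List α) :=
  {w | ∃ qf ∈ A.accept, Relation.ReflTransGen (Step A) ([], A.start, w) ([], qf, [])}

end GRLOWJFA

def GRLOWJ {α : Type} (L : Set (List α)) : Prop :=
  ∃ (σ : Type) (_ : Finite σ) (A : GRLOWJFA α σ), A.language = L

/-! ### Generalized left linear one-way jumping finite automata -/

structure GLLOWJFA (α σ : Type) where
  start : σ
  accept : Set σ
  /-- A rule `(q, w, p)` means: from state `p`, delete `w`, move to state `q`. -/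
  rules : Set (σ × List α × σ)
  finite : rules.Finite
  ne : ∀ r ∈ rules, r.2.1 ≠ ([] : List α)
  det : ∀ p w q q', (q, w, p) ∈ rules → (q', w, p) ∈ rules → q = q'

namespace GLLOWJFA
variable {α σ : Type}

def sig (A : GLLOWJFA α σ) (p : σ) : Set (List α) := {w | ∃ q, (q, w, p) ∈ A.rules}

/-- Configurations are triples `(v, p, t)` representing `v p t ∈ Σ* Q Σ*`. -/
inductive Step (A : GLLOWJFA α σ) :
    List α × σ × List α → List α × σ × List α → Prop
  /-- `v q u t ↶ v x u p t`. -/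
  | rule {p q : σ} {x : List α} (t u v : List α) :
      (q, x, p) ∈ A.rules →
      NoSub (A.sig p) u →
      (¬ ∃ x₂ u₁ : List α, x₂ ≠ [] ∧ u₁ ≠ [] ∧ x₂ <:+ x ∧ u₁ <+: u ∧ x₂ ++ u₁ = x) →
      Step A (v ++ x ++ u, p, t) (v, q, u ++ t)
  /-- `y x p ↶ y p x`. -/
  | ret {p : σ} (x y : List α) :
      x ≠ [] → NoSub (A.sig p) y →
      Step A (y, p, x) (y ++ x, p, [])

def language (A : GLLOWJFA α σ) : Set (List α) :=
  {w | ∃ qf ∈ A.accept, Relation.ReflTransGen (Step A) (w, A.start, []) ([], qf, [])}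

end GLLOWJFA

def GLLOWJ {α : Type} (L : Set (List α)) : Prop :=
  ∃ (σ : Type) (_ : Finite σ) (A : GLLOWJFA α σ), A.language = L

inductive St10 : Type | q0 | q1 | q2
  deriving DecidableEq

/-- The GLLOWJFA of STATEMENT 10 (a rule `(q, w, p)` deletes `w` moving from `p` to `q`). -/
def A10 : GLLOWJFA ABC St10 where
  start := St10.q0
  accept := {St10.q1}
  rules := {(St10.q1, [ABC.c], St10.q0), (St10.q1, [ABC.a, ABC.b], St10.q1),
            (St10.q2, [ABC.a], St10.q0), (St10.q2, [ABC.b], St10.q0)}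
  finite := (((Set.finite_singleton _).insert _).insert _).insert _
  ne := by
    intro r hr
    simp only [Set.mem_insert_iff, Set.mem_singleton_iff] at hr
    rcases hr with rfl|rfl|rfl|rfl <;> simp
  det := by
    intro p w q q' h h'
    simp only [Set.mem_insert_iff, Set.mem_singleton_iff] at h h'
    rcases h with h|h|h|h <;> rcases h' with h'|h'|h'|h' <;> simp_all


namespace Stmt10
open ABC St10 GLLOWJFA

abbrev D : Set (List ABC) := Dyck ABC.a ABC.b

lemma pref_app {α} : ∀ {x : List α} {p y : List α}, p <+: x ++ y →
    p <+: x ∨ ∃ q, q <+: y ∧ p = x ++ q := by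
  intro x
  induction x with
  | nil => intro p y h; exact Or.inr ⟨p, h, rfl⟩
  | cons a x ih =>
    intro p y h
    cases p with
    | nil => exact Or.inl (nil_prefix)
    | cons b p =>
      rw [cons_append, List.cons_prefix_cons] at h
      obtain ⟨rfl, h⟩ := h
      rcases ih h with h | ⟨q, hq, rfl⟩
      · exact Or.inl (List.cons_prefix_cons.mpr ⟨rfl, h⟩)
      · exact Or.inr ⟨q, hq, rfl⟩

lemma mem_rules {q : St10} {w : List ABC} {p : St10} : (q, w, p) ∈ A10.rules ↔
    (q = q1 ∧ w = [c] ∧ p = q0) ∨ (q = q1 ∧ w = [a, b] ∧ p = q1) ∨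
    (q = q2 ∧ w = [a] ∧ p = q0) ∨ (q = q2 ∧ w = [b] ∧ p = q0) := by
  simp [A10, Prod.ext_iff]

lemma sig_q0 : A10.sig q0 = {[a], [b], [c]} := by
  ext w
  simp only [GLLOWJFA.sig, Set.mem_setOf_eq, Set.mem_insert_iff, Set.mem_singleton_iff]
  constructor
  · rintro ⟨q, h⟩
    rcases mem_rules.mp h with ⟨_, rfl, _⟩ | ⟨_, _, h⟩ | ⟨_, rfl, _⟩ | ⟨_, rfl, _⟩ <;> simp_all
  · rintro (rfl | rfl | rfl)
    exacts [⟨q2, by simp [A10]⟩, ⟨q2, by simp [A10]⟩, ⟨q1, by simp [A10]⟩]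

lemma sig_q1 : A10.sig q1 = {[a, b]} := by
  ext w
  simp only [GLLOWJFA.sig, Set.mem_setOf_eq, Set.mem_singleton_iff]
  constructor
  · rintro ⟨q, h⟩
    rcases mem_rules.mp h with ⟨_, _, h⟩ | ⟨_, rfl, _⟩ | ⟨_, _, h⟩ | ⟨_, _, h⟩ <;> simp_all
  · rintro rfl; exact ⟨q1, by simp [A10]⟩

lemma noSub_q0 {u : List ABC} (h : NoSub (A10.sig q0) u) : u = [] := by
  cases u with
  | nil => rfl
  | cons x r =>
    exfalso
    apply h
    refine ⟨[x], ?_, [], r, by simp⟩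
    rw [sig_q0]; cases x <;> simp

lemma noSub_q0_nil : NoSub (A10.sig q0) ([] : List ABC) := by
  rintro ⟨w, hw, hinf⟩
  rw [List.infix_nil] at hinf
  subst hinf
  rw [sig_q0] at hw
  simp at hw

lemma noSub_q1_iff {u : List ABC} : NoSub (A10.sig q1) u ↔ ¬ ([a, b] <:+: u) := by
  rw [NoSub, sig_q1]; simp

lemma nil_mem_D : ([] : List ABC) ∈ D := by
  refine ⟨by simp, by simp, ?_⟩
  intro u hu
  rw [List.prefix_nil] at hu
  simp [hu]

lemma dyck_del {v u : List ABC} (h : v ++ [a, b] ++ u ∈ D) : v ++ u ∈ D := by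
  obtain ⟨h1, h2, h3⟩ := h
  refine ⟨?_, ?_, ?_⟩
  · intro x hx; apply h1; simp only [mem_append] at hx ⊢; tauto
  · simp only [count_append] at h2 ⊢
    simp only [count_cons, count_nil, beq_iff_eq] at h2
    simp only [reduceCtorEq, if_false, if_true, reduceIte] at h2
    omega
  · intro p hp
    rcases pref_app hp with hp | ⟨q, hq, rfl⟩
    · have := h3 p (hp.trans ((prefix_append v [a, b]).trans (prefix_append _ u)))
      exact this
    · have := h3 (v ++ [a, b] ++ q) ((List.prefix_append_right_inj (v ++ [a, b])).mpr hq)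
      simp [count_append, count_cons, count_nil, beq_iff_eq] at this ⊢
      omega

lemma dyck_ins {v u : List ABC} (h : v ++ u ∈ D) : v ++ [a, b] ++ u ∈ D := by
  obtain ⟨h1, h2, h3⟩ := h
  refine ⟨?_, ?_, ?_⟩
  · intro x hx
    simp only [mem_append, mem_cons, not_mem_nil] at hx
    rcases hx with (hx | hx | hx | hx) | hx
    · exact h1 x (by simp [hx])
    · exact Or.inl hx
    · exact Or.inr hx
    · exact absurd hx (by simp)
    · exact h1 x (by simp [hx])
  · simp [count_append, count_cons, count_nil, beq_iff_eq] at h2 ⊢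
    omega
  · intro p hp
    rcases pref_app hp with hp | ⟨q, hq, rfl⟩
    · rcases pref_app hp with hp | ⟨q, hq, rfl⟩
      · exact h3 p (hp.trans (prefix_append v u))
      · -- q <+: [a,b]
        have hv := h3 v (prefix_append v u)
        rcases (List.prefix_cons_iff.mp hq) with rfl | ⟨q', rfl, hq'⟩
        · simpa using hv
        · rcases (List.prefix_cons_iff.mp hq') with rfl | ⟨q'', rfl, hq''⟩
          · simp [count_append, count_cons, count_nil, beq_iff_eq]
            omega
          · rw [List.prefix_nil] at hq''
            subst hq''
            simp [count_append, count_cons, count_nil, beq_iff_eq]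
            omega
    · have := h3 (v ++ q) ((List.prefix_append_right_inj v).mpr hq)
      simp [count_append, count_cons, count_nil, beq_iff_eq] at this ⊢
      omega

lemma all_a_of_noab : ∀ r : List ABC, (∀ x ∈ r, x = a ∨ x = b) →
    ¬ ([a, b] <:+: (a :: r)) → ∀ x ∈ r, x = a := by
  intro r
  induction r with
  | nil => intro _ _ x hx; simp at hx
  | cons y r ih =>
    intro hab hno x hx
    rcases hab y (by simp) with rfl | rfl
    · rcases List.mem_cons.mp hx with rfl | hx
      · rfl
      · exact ih (fun z hz => hab z (by simp [hz])) (fun hinf => hno (hinf.trans (List.suffix_cons a (a :: r)).isInfix)) x hx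
    · exact absurd ⟨[], r, rfl⟩ hno

lemma dyck_noab {w : List ABC} (hw : w ∈ D) (h : ¬ ([a, b] <:+: w)) : w = [] := by
  obtain ⟨h1, h2, h3⟩ := hw
  cases w with
  | nil => rfl
  | cons x r =>
    exfalso
    have hx : x = a := by
      rcases h1 x (by simp) with rfl | rfl
      · rfl
      · have := h3 [b] ⟨r, rfl⟩
        simp [count_cons] at this
    subst hx
    have hall := all_a_of_noab r (fun z hz => h1 z (by simp [hz])) h
    have hb : (a :: r).count b = 0 := by
      rw [count_eq_zero]
      intro hbmem
      rcases List.mem_cons.mp hbmem with h' | h'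
      · exact absurd h'.symm (by decide)
      · exact absurd (hall b h').symm (by decide)
    have ha : 1 ≤ (a :: r).count a := by simp [count_cons]
    omega

lemma rightmost_ab : ∀ n (y : List ABC), y.length ≤ n → [a, b] <:+: y →
    ∃ v u, y = v ++ [a, b] ++ u ∧ ¬ ([a, b] <:+: u) := by
  intro n
  induction n with
  | zero =>
    intro y hy hinf
    obtain ⟨s, t, hst⟩ := hinf
    have := congrArg List.length hst
    simp at this
    omega
  | succ n ih =>
    intro y hy hinf
    obtain ⟨s, t, hst⟩ := hinf
    by_cases ht : [a, b] <:+: t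
    · have hlen : t.length ≤ n := by
        have := congrArg List.length hst
        simp at this
        omega
      obtain ⟨v1, u1, rfl, hu1⟩ := ih t hlen ht
      exact ⟨s ++ [a, b] ++ v1, u1, by rw [← hst]; simp [append_assoc], hu1⟩
    · exact ⟨s, t, hst.symm, ht⟩

lemma overlap_ab {u : List ABC} :
    ¬ ∃ x₂ u₁ : List ABC, x₂ ≠ [] ∧ u₁ ≠ [] ∧ x₂ <:+ [a, b] ∧ u₁ <+: u ∧ x₂ ++ u₁ = [a, b] := by
  rintro ⟨x₂, u₁, hx, hu, hsuf, -, heq⟩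
  rcases x₂ with - | ⟨z, x₂'⟩
  · exact hx rfl
  rcases u₁ with - | ⟨y, u₁'⟩
  · exact hu rfl
  have heq' : z :: (x₂' ++ y :: u₁') = [a, b] := by simpa using heq
  rcases x₂' with - | ⟨z2, x₂''⟩
  · simp at heq'
    obtain ⟨rfl, rfl, rfl⟩ := heq'
    obtain ⟨l, hl⟩ := hsuf
    have hlen := congrArg List.length hl
    simp at hlen
    obtain ⟨zz, rfl⟩ := List.length_eq_one_iff.mp hlen
    simp at hl
  · simp at heq'

lemma overlap_nil {x : List ABC} :
    ¬ ∃ x₂ u₁ : List ABC, x₂ ≠ [] ∧ u₁ ≠ [] ∧ x₂ <:+ x ∧ u₁ <+: ([] : List ABC) ∧ x₂ ++ u₁ = x := by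
  rintro ⟨x₂, u₁, hx, hu, -, hpre, -⟩
  rw [List.prefix_nil] at hpre
  exact hu hpre

lemma rule_c_mem : (q1, [c], q0) ∈ A10.rules := by simp [A10]
lemma rule_ab_mem : (q1, [a, b], q1) ∈ A10.rules := by simp [A10]

lemma reach : ∀ n (w : List ABC), w.length ≤ n → w ∈ D → ∀ y t, y ++ t = w →
    Relation.ReflTransGen (Step A10) (y, q1, t) ([], q1, []) := by
  intro n
  induction n with
  | zero =>
    intro w hw hD y t hyt
    have hwnil : w = [] := by cases w with | nil => rfl | cons _ _ => simp at hw
    subst hwnil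
    obtain ⟨rfl, rfl⟩ := List.append_eq_nil_iff.mp hyt
    exact Relation.ReflTransGen.refl
  | succ n ih =>
    intro w hlen hD y t hyt
    subst hyt
    by_cases hab : [a, b] <:+: y
    · obtain ⟨v, u, rfl, hu⟩ := rightmost_ab y.length y le_rfl hab
      have step : Step A10 (v ++ [a, b] ++ u, q1, t) (v, q1, u ++ t) :=
        Step.rule t u v rule_ab_mem (noSub_q1_iff.mpr hu) overlap_ab
      refine Relation.ReflTransGen.head step ?_
      have hD' : v ++ (u ++ t) ∈ D := by
        have := dyck_del (v := v) (u := u ++ t) (by simpa [append_assoc] using hD)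
        exact this
      refine ih (v ++ (u ++ t)) ?_ hD' v (u ++ t) rfl
      have := hlen
      simp only [length_append] at this ⊢
      simp at this
      omega
    · by_cases ht : t = []
      · subst ht
        have : y = [] := dyck_noab (by simpa using hD) hab
        subst this
        exact Relation.ReflTransGen.refl
      · have step1 : Step A10 (y, q1, t) (y ++ t, q1, []) :=
          Step.ret t y ht (noSub_q1_iff.mpr hab)
        refine Relation.ReflTransGen.head step1 ?_
        have hne : y ++ t ≠ [] := by
          intro h0
          exact ht (List.append_eq_nil_iff.mp h0).2
        have hab2 : [a, b] <:+: (y ++ t) := by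
          by_contra hno
          exact hne (dyck_noab hD hno)
        obtain ⟨v, u, hvu, hu⟩ := rightmost_ab (y ++ t).length (y ++ t) le_rfl hab2
        have step2 : Step A10 (v ++ [a, b] ++ u, q1, []) (v, q1, u ++ []) :=
          Step.rule [] u v rule_ab_mem (noSub_q1_iff.mpr hu) overlap_ab
        rw [hvu]
        refine Relation.ReflTransGen.head step2 ?_
        have hD' : v ++ (u ++ []) ∈ D := by
          have := dyck_del (v := v) (u := u ++ []) (by simpa [append_assoc, hvu.symm] using hD)
          exact this
        refine ih (v ++ (u ++ [])) ?_ hD' v (u ++ []) rfl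
        have hl2 := congrArg List.length hvu
        simp only [length_append] at hl2 hlen ⊢
        simp at hl2 ⊢
        omega

def Pc : List ABC × St10 × List ABC → Prop
  | (y, p, t) => (p = q1 ∧ y ++ t ∈ D) ∨
      (p = q0 ∧ ((∃ v, y = v ++ [c] ∧ v ++ t ∈ D) ∨ (y = [] ∧ ∃ v, t = v ++ [c] ∧ v ∈ D)))

lemma step_pres {cfg cfg' : List ABC × St10 × List ABC}
    (hstep : Step A10 cfg cfg') (hP : Pc cfg') : Pc cfg := by
  cases hstep with
  | @rule p q x t u v hr hns hov =>
    rcases mem_rules.mp hr with ⟨rfl, rfl, rfl⟩ | ⟨rfl, rfl, rfl⟩ | ⟨rfl, rfl, rfl⟩ | ⟨rfl, rfl, rfl⟩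
    · -- (q1, [c], q0)
      have hu : u = [] := noSub_q0 hns
      subst hu
      rcases hP with ⟨-, hD⟩ | ⟨h0, -⟩
      · exact Or.inr ⟨rfl, Or.inl ⟨v, by simp, by simpa using hD⟩⟩
      · exact absurd h0 (by decide)
    · -- (q1, [a,b], q1)
      rcases hP with ⟨-, hD⟩ | ⟨h0, -⟩
      · refine Or.inl ⟨rfl, ?_⟩
        have := dyck_ins (v := v) (u := u ++ t) (by simpa [append_assoc] using hD)
        simpa [append_assoc] using this
      · exact absurd h0 (by decide)
    · rcases hP with ⟨h0, -⟩ | ⟨h0, -⟩ <;> exact absurd h0 (by decide)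
    · rcases hP with ⟨h0, -⟩ | ⟨h0, -⟩ <;> exact absurd h0 (by decide)
  | @ret p x y hx hns =>
    cases p with
    | q0 =>
      have hy : y = [] := noSub_q0 hns
      subst hy
      rcases hP with ⟨h0, -⟩ | ⟨-, ⟨v, hv, hD⟩ | ⟨h0, -⟩⟩
      · exact absurd h0 (by decide)
      · exact Or.inr ⟨rfl, Or.inr ⟨rfl, v, by simpa using hv, by simpa using hD⟩⟩
      · exact absurd (by simpa using h0 : x = []) hx
    | q1 =>
      rcases hP with ⟨-, hD⟩ | ⟨h0, -⟩
      · exact Or.inl ⟨rfl, by simpa using hD⟩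
      · exact absurd h0 (by decide)
    | q2 =>
      rcases hP with ⟨h0, -⟩ | ⟨h0, -⟩ <;> exact absurd h0 (by decide)

end Stmt10

theorem stmt_10 :
    A10.language = {w : List ABC | ∃ v ∈ Dyck ABC.a ABC.b, w = v ++ [ABC.c]} := by
  open Stmt10 ABC St10 GLLOWJFA in
  ext w
  constructor
  · rintro ⟨qf, hqf, hsteps⟩
    have hqf' : qf = q1 := hqf
    subst hqf'
    have hP : Pc (w, St10.q0, []) := by
      refine Relation.ReflTransGen.head_induction_on (motive := fun s _ => Pc s) hsteps ?_ ?_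
      · exact Or.inl ⟨rfl, nil_mem_D⟩
      · intro s s' hstep _ hP
        exact step_pres hstep hP
    rcases hP with ⟨h0, -⟩ | ⟨-, ⟨v, hv, hD⟩ | ⟨-, v, h0, -⟩⟩
    · exact absurd h0 (by decide)
    · exact ⟨v, by simpa using hD, hv⟩
    · simp at h0
  · rintro ⟨v, hv, rfl⟩
    refine ⟨q1, rfl, ?_⟩
    have step1 : Step A10 (v ++ [c], St10.q0, []) (v, q1, []) := by
      have := Step.rule (A := A10) (p := St10.q0) (q := q1) (x := [c]) [] [] v
        rule_c_mem noSub_q0_nil overlap_nil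
      simpa using this
    exact Relation.ReflTransGen.head step1 (reach v.length v le_rfl hv v [] (by simp))
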